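/- For every natural number n, the number of standard Young tableaux with 2n cells and at most 2 rows, both of even length, that cannot be written as a concatenation Q_1 * Q_2 of two standard Young tableaux each having exactly two rows, both of odd length, equals the n-th Catalan number (the number of Dyck paths of length 2n, i.e., of Riordan words of length 2n and shape 0 containing no letter 0). -/

import Mathlib

/-- A Riordan word: letters in {1,0,-1}, all prefix sums nonnegative, and a letter 0
occurs only when the prefix sum before it is strictly positive. -/
def IsRiordan (w : List ℤ) : Prop :=
  (∀ x ∈ w, x = 1 ∨ x = 0 ∨ x = -1) ∧
  (∀ j, 0 ≤ (w.take j).sum) ∧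
  (∀ j, j < w.length → w.getD j 0 = 0 → 0 < (w.take j).sum)

/-- Descent set of a word: 1-indexed positions j (with 1 ≤ j ≤ length - 1) such that
(w_j, w_{j+1}) = (1,0), or (0,-1), or (1,-1) with strictly positive prefix sum before w_j. -/
def wordDes (w : List ℤ) : Set ℕ :=
  {j | 1 ≤ j ∧ j + 1 ≤ w.length ∧
    ((w.getD (j - 1) 0 = 1 ∧ w.getD j 0 = 0) ∨
     (w.getD (j - 1) 0 = 0 ∧ w.getD j 0 = -1) ∨
     (w.getD (j - 1) 0 = 1 ∧ w.getD j 0 = -1 ∧ 0 < (w.take (j - 1)).sum))}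

/-- A filling with at most three rows, each row given as its list of entries. -/
structure Tab3 where
  row1 : List ℕ
  row2 : List ℕ
  row3 : List ℕ

namespace Tab3

def row (T : Tab3) : ℕ → List ℕ
  | 0 => T.row1
  | 1 => T.row2
  | 2 => T.row3
  | _ => []

/-- Number of cells. -/
def size (T : Tab3) : ℕ := T.row1.length + T.row2.length + T.row3.length

/-- `T` is a standard Young tableau with at most 3 rows: weakly decreasing row lengths,
rows strictly increasing, columns strictly increasing, and the entries are 1, …, size. -/
def IsSYT (T : Tab3) : Prop :=
  T.row2.length ≤ T.row1.length ∧ T.row3.length ≤ T.row2.length ∧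
  T.row1.Chain' (· < ·) ∧ T.row2.Chain' (· < ·) ∧ T.row3.Chain' (· < ·) ∧
  (∀ j < T.row2.length, T.row1.getD j 0 < T.row2.getD j 0) ∧
  (∀ j < T.row3.length, T.row2.getD j 0 < T.row3.getD j 0) ∧
  (T.row1 ++ T.row2 ++ T.row3).Perm (List.range' 1 T.size)

/-- Descent set of a tableau: entries j such that j+1 lies in a strictly lower row. -/
def des (T : Tab3) : Set ℕ :=
  {j | ∃ i i' : ℕ, i < i' ∧ j ∈ T.row i ∧ j + 1 ∈ T.row i'}

/-- All three row lengths have the same parity. -/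
def SameParity (T : Tab3) : Prop :=
  T.row1.length % 2 = T.row2.length % 2 ∧ T.row2.length % 2 = T.row3.length % 2

/-- All three row lengths are even. -/
def AllEven (T : Tab3) : Prop :=
  T.row1.length % 2 = 0 ∧ T.row2.length % 2 = 0 ∧ T.row3.length % 2 = 0

/-- `p = (i, j)` is a cell of `T`. -/
def IsCell (T : Tab3) (p : ℕ × ℕ) : Prop := p.2 < (T.row p.1).length

/-- The entry of `T` in cell `p = (i, j)`. -/
def entry (T : Tab3) (p : ℕ × ℕ) : ℕ := (T.row p.1).getD p.2 0

/-- Concatenation of tableaux: shift the entries of `T2` by the size of `T1` and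
append rows to rows. -/
def concat (T1 T2 : Tab3) : Tab3 :=
  ⟨T1.row1 ++ T2.row1.map (· + T1.size),
   T1.row2 ++ T2.row2.map (· + T1.size),
   T1.row3 ++ T2.row3.map (· + T1.size)⟩

/-- Delete the cell containing the entry `v`. -/
def eraseEntry (T : Tab3) (v : ℕ) : Tab3 :=
  ⟨T.row1.erase v, T.row2.erase v, T.row3.erase v⟩

/-- `T` has exactly two rows, both of odd length. -/
def TwoOddRows (T : Tab3) : Prop :=
  T.row3 = [] ∧ T.row1.length % 2 = 1 ∧ T.row2.length % 2 = 1

end Tab3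

/-- A cell of `T` whose entry is larger than `r`. -/
def BigCell (T : Tab3) (r : ℕ) (p : ℕ × ℕ) : Prop := T.IsCell p ∧ r < T.entry p

/-- The cells of `T` with entries larger than `r` form a horizontal strip (no two in the
same column, the remaining cells form the diagram of a partition) with at most one cell
in the first row, along which the entries increase from left to right. -/
def TopStrip (T : Tab3) (r : ℕ) : Prop :=
  (∀ p q, BigCell T r p → BigCell T r q → p ≠ q → p.2 ≠ q.2) ∧
  (∀ p q : ℕ × ℕ, T.IsCell q → T.entry q ≤ r → p.1 ≤ q.1 → p.2 ≤ q.2 →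
    T.IsCell p ∧ T.entry p ≤ r) ∧
  (∀ p q, BigCell T r p → BigCell T r q → p.1 = 0 → q.1 = 0 → p = q) ∧
  (∀ p q, BigCell T r p → BigCell T r q → p.2 < q.2 → T.entry p < T.entry q)

/-- The Young diagram of the partition `(a, b, c)` (with `a ≥ b ≥ c`). -/
def diag3 (a b c : ℕ) : Finset (ℕ × ℕ) :=
  ({0} : Finset ℕ) ×ˢ Finset.range a ∪ ({1} : Finset ℕ) ×ˢ Finset.range b ∪
    ({2} : Finset ℕ) ×ˢ Finset.range c

/-- A finite set of cells is the diagram of a partition iff it is downward closed. -/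
def IsYoungSet (U : Finset (ℕ × ℕ)) : Prop :=
  ∀ p ∈ U, ∀ i j : ℕ, i ≤ p.1 → j ≤ p.2 → (i, j) ∈ U

/-- The length of row `i` of a finite set of cells. -/
def rowLenOf (U : Finset (ℕ × ℕ)) (i : ℕ) : ℕ := (U.filter (fun p => p.1 = i)).card

/-- `S` is a horizontal strip of `m` cells added to the partition `(a,b,c)`, with at most
one cell in the first row, such that the union of the diagram of `(a,b,c)` and `S` is the
diagram of a partition with at most 3 parts, all of the same parity. -/
def GoodStrip (a b c m : ℕ) (S : Finset (ℕ × ℕ)) : Prop :=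
  S.card = m ∧ Disjoint S (diag3 a b c) ∧
  (∀ p ∈ S, ∀ q ∈ S, p ≠ q → p.2 ≠ q.2) ∧
  IsYoungSet (diag3 a b c ∪ S) ∧
  (∀ p ∈ diag3 a b c ∪ S, p.1 < 3) ∧
  rowLenOf (diag3 a b c ∪ S) 0 % 2 = rowLenOf (diag3 a b c ∪ S) 1 % 2 ∧
  rowLenOf (diag3 a b c ∪ S) 1 % 2 = rowLenOf (diag3 a b c ∪ S) 2 % 2 ∧
  (S.filter (fun p => p.1 = 0)).card ≤ 1

/-- Partitions of `r` with at most 3 parts, encoded as weakly decreasing triples. -/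
def parts3 (r : ℕ) : Finset (ℕ × ℕ × ℕ) :=
  ((Finset.range (r + 1)) ×ˢ (Finset.range (r + 1)) ×ˢ (Finset.range (r + 1))).filter
    (fun t => t.2.1 ≤ t.1 ∧ t.2.2 ≤ t.2.1 ∧ t.1 + t.2.1 + t.2.2 = r)

/-- The number of standard Young tableaux of shape `(a, b, c)`. -/
noncomputable def fSYT (a b c : ℕ) : ℕ :=
  Nat.card {T : Tab3 // T.IsSYT ∧ T.row1.length = a ∧ T.row2.length = b ∧ T.row3.length = c}

/-- The number of good horizontal strips of `m` cells added to `(a, b, c)`. -/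
noncomputable def hStrip (a b c m : ℕ) : ℕ :=
  Nat.card {S : Finset (ℕ × ℕ) // GoodStrip a b c m S}


namespace S8

def ct (w : List Bool) : ℕ := w.count true
def cf (w : List Bool) : ℕ := w.count false

lemma ct_nil : ct [] = 0 := rfl
lemma cf_nil : cf [] = 0 := rfl
lemma ct_cons (b : Bool) (w : List Bool) : ct (b :: w) = ct w + (if b then 1 else 0) := by
  cases b <;> simp [ct, List.count_cons]
lemma cf_cons (b : Bool) (w : List Bool) : cf (b :: w) = cf w + (if b then 0 else 1) := by
  cases b <;> simp [cf, List.count_cons]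
lemma ct_append (u v : List Bool) : ct (u ++ v) = ct u + ct v := by simp [ct]
lemma cf_append (u v : List Bool) : cf (u ++ v) = cf u + cf v := by simp [cf]
lemma ct_add_cf (w : List Bool) : ct w + cf w = w.length := by
  induction w with
  | nil => rfl
  | cons b t ih => cases b <;> simp [ct_cons, cf_cons] <;> omega

def bal (w : List Bool) : Prop := ∀ k, cf (w.take k) ≤ ct (w.take k)

def isDy (w : List Bool) : Prop := bal w ∧ ct w = cf w

def cutAt (w : List Bool) (k : ℕ) : Prop :=
  ct (w.take k) % 2 = 1 ∧ cf (w.take k) % 2 = 1 ∧ bal (w.drop k)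

def good (w : List Bool) : Prop :=
  bal w ∧ ct w % 2 = 0 ∧ cf w % 2 = 0 ∧ ∀ k, 0 < k → k < w.length → ¬ cutAt w k

lemma bal_nil : bal [] := by intro k; simp [ct, cf]
lemma isDy_nil : isDy [] := ⟨bal_nil, rfl⟩
lemma good_nil : good [] := ⟨bal_nil, rfl, rfl, by simp⟩

lemma bal_le (h : bal w) : cf w ≤ ct w := by
  have := h w.length; rwa [List.take_length] at this

lemma take_saturate (w : List Bool) (h : w.length ≤ k) : w.take k = w :=
  List.take_of_length_le h

lemma bal_of_prefixes (h : ∀ j ≤ w.length, cf (w.take j) ≤ ct (w.take j)) : bal w := by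
  intro k
  rcases le_or_gt k w.length with hk | hk
  · exact h k hk
  · rw [take_saturate w hk.le]
    have := h w.length le_rfl
    rwa [List.take_length] at this

lemma bal_take (h : bal w) (k : ℕ) : bal (w.take k) := by
  intro j
  rw [List.take_take]
  exact h _

lemma isDy_len (h : isDy w) : w.length = 2 * ct w := by
  have h1 := ct_add_cf w; have h2 := h.2; omega

def glue (e w : List Bool) (c : Bool) : List Bool := true :: e ++ c :: w

lemma len_glue : (glue e w c).length = e.length + w.length + 2 := by
  simp [glue]; omega

lemma take_glue (e w : List Bool) (c : Bool) (k : ℕ) :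
    (glue e w c).take (k+1) = true :: (e.take k ++ (c :: w).take (k - e.length)) := by
  simp [glue, List.take_succ_cons, List.take_append]

lemma drop_glue (e w : List Bool) (c : Bool) (k : ℕ) :
    (glue e w c).drop (k+1) = e.drop k ++ (c :: w).drop (k - e.length) := by
  simp [glue, List.drop_succ_cons, List.drop_append]

lemma take_glue_low (h : k ≤ e.length) :
    (glue e w c).take (k+1) = true :: e.take k := by
  rw [take_glue, Nat.sub_eq_zero_of_le h]; simp

lemma take_glue_mid :
    (glue e w c).take (e.length+2) = true :: (e ++ [c]) := by
  have : e.length + 2 = (e.length + 1) + 1 := rfl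
  rw [this, take_glue, List.take_of_length_le (show e.length ≤ e.length + 1 by omega)]
  simp

lemma take_glue_high (h : e.length + 1 ≤ k) :
    (glue e w c).take (k+1) = true :: (e ++ c :: w.take (k - e.length - 1)) := by
  rw [take_glue, List.take_of_length_le (show e.length ≤ k by omega)]
  obtain ⟨j, hj⟩ : ∃ j, k - e.length = j + 1 := ⟨k - e.length - 1, by omega⟩
  rw [hj, List.take_succ_cons]
  simp

lemma drop_glue_low (h : k ≤ e.length) :
    (glue e w c).drop (k+1) = e.drop k ++ c :: w := by
  rw [drop_glue, Nat.sub_eq_zero_of_le h]; simp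

lemma drop_glue_high (h : e.length + 1 ≤ k) :
    (glue e w c).drop (k+1) = w.drop (k - e.length - 1) := by
  rw [drop_glue, List.drop_of_length_le (show e.length ≤ k by omega)]
  obtain ⟨j, hj⟩ : ∃ j, k - e.length = j + 1 := ⟨k - e.length - 1, by omega⟩
  rw [hj, List.drop_succ_cons]
  simp

-- counts of prefixes of glue
lemma ct_take_glue_low (h : k ≤ e.length) :
    ct ((glue e w c).take (k+1)) = 1 + ct (e.take k) := by
  rw [take_glue_low h, ct_cons]; simp; omega
lemma cf_take_glue_low (h : k ≤ e.length) :
    cf ((glue e w c).take (k+1)) = cf (e.take k) := by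
  rw [take_glue_low h, cf_cons]; simp
lemma ct_take_glue_midt :
    ct ((glue e w true).take (e.length+2)) = ct e + 2 := by
  rw [take_glue_mid, ct_cons, ct_append, ct_cons]; simp [ct_nil]; try omega
lemma cf_take_glue_midt :
    cf ((glue e w true).take (e.length+2)) = cf e := by
  rw [take_glue_mid, cf_cons, cf_append, cf_cons]; simp [cf_nil]
lemma ct_take_glue_midf :
    ct ((glue e w false).take (e.length+2)) = ct e + 1 := by
  rw [take_glue_mid, ct_cons, ct_append, ct_cons]; simp [ct_nil]; try omega
lemma cf_take_glue_midf :
    cf ((glue e w false).take (e.length+2)) = cf e + 1 := by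
  rw [take_glue_mid, cf_cons, cf_append, cf_cons]; simp [cf_nil]; try omega
lemma ct_take_glue_hight (h : e.length + 1 ≤ k) :
    ct ((glue e w true).take (k+1)) = ct e + 2 + ct (w.take (k - e.length - 1)) := by
  rw [take_glue_high h, ct_cons, ct_append, ct_cons]; simp; try omega
lemma cf_take_glue_hight (h : e.length + 1 ≤ k) :
    cf ((glue e w true).take (k+1)) = cf e + cf (w.take (k - e.length - 1)) := by
  rw [take_glue_high h, cf_cons, cf_append, cf_cons]; simp
lemma ct_take_glue_highf (h : e.length + 1 ≤ k) :
    ct ((glue e w false).take (k+1)) = ct e + 1 + ct (w.take (k - e.length - 1)) := by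
  rw [take_glue_high h, ct_cons, ct_append, ct_cons]; simp; try omega
lemma cf_take_glue_highf (h : e.length + 1 ≤ k) :
    cf ((glue e w false).take (k+1)) = cf e + 1 + cf (w.take (k - e.length - 1)) := by
  rw [take_glue_high h, cf_cons, cf_append, cf_cons]; simp; omega

lemma ct_glue_t : ct (glue e w true) = ct e + 2 + ct w := by
  simp [glue, ct_cons, ct_append]; omega
lemma cf_glue_t : cf (glue e w true) = cf e + cf w := by
  simp [glue, cf_cons, cf_append]
lemma ct_glue_f : ct (glue e w false) = ct e + 1 + ct w := by
  simp [glue, ct_cons, ct_append]; omega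
lemma cf_glue_f : cf (glue e w false) = cf e + 1 + cf w := by
  simp [glue, cf_cons, cf_append]; omega

lemma bal_glue (he : bal e) (hw : bal w) (c : Bool) : bal (glue e w c) := by
  apply bal_of_prefixes
  intro j _
  match j with
  | 0 => simp [ct_nil, cf_nil]
  | k+1 =>
    rcases le_or_gt k e.length with h | h
    · rw [ct_take_glue_low h, cf_take_glue_low h]
      have := he k; omega
    · have h' : e.length + 1 ≤ k := h
      have hb := hw (k - e.length - 1)
      have hbe := bal_le he
      cases c
      · rw [ct_take_glue_highf h', cf_take_glue_highf h']; omega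
      · rw [ct_take_glue_hight h', cf_take_glue_hight h']; omega

lemma drop_glue_start : (glue e w c).drop (e.length + 2) = w := by
  have : e.length + 2 = (e.length + 1) + 1 := rfl
  rw [this, drop_glue_high le_rfl]; simp

-- equality-point characterizations
lemma no_eqpt_low (he : isDy e) (hk : k ≤ e.length) :
    ct ((glue e w c).take (k+1)) ≠ cf ((glue e w c).take (k+1)) := by
  rw [ct_take_glue_low hk, cf_take_glue_low hk]
  have := he.1 k; omega

lemma eqpt_false_mid (he : isDy e) :
    ct ((glue e w false).take (e.length+2)) = cf ((glue e w false).take (e.length+2)) := by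
  rw [ct_take_glue_midf, cf_take_glue_midf, he.2]

lemma no_eqpt_true (he : isDy e) (hw : bal w) (hk : 1 ≤ k) :
    ct ((glue e w true).take k) ≠ cf ((glue e w true).take k) := by
  obtain ⟨j, rfl⟩ : ∃ j, k = j + 1 := ⟨k - 1, by omega⟩
  rcases le_or_gt j e.length with h | h
  · exact no_eqpt_low he h
  · have h' : e.length + 1 ≤ j := h
    rw [ct_take_glue_hight h', cf_take_glue_hight h', he.2]
    have := hw (j - e.length - 1); omega

lemma h1pt_true_mid (he : isDy e) :
    ct ((glue e w true).take (e.length+1)) = cf ((glue e w true).take (e.length+1)) + 1 := by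
  have h0 : e.length + 1 = e.length + 1 := rfl
  rw [show e.length + 1 = e.length + 1 from rfl]
  rw [ct_take_glue_low le_rfl, cf_take_glue_low le_rfl, List.take_length, he.2]
  omega

lemma no_h1pt_true_high (he : isDy e) (hw : bal w) (hk : e.length + 2 ≤ k) :
    ct ((glue e w true).take k) ≠ cf ((glue e w true).take k) + 1 := by
  obtain ⟨j, rfl⟩ : ∃ j, k = j + 1 := ⟨k - 1, by omega⟩
  have h' : e.length + 1 ≤ j := by omega
  rw [ct_take_glue_hight h', cf_take_glue_hight h', he.2]
  have := hw (j - e.length - 1); omega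

lemma glue_append_inj (hlen : e1.length = e2.length)
    (h : glue e1 w1 c1 = glue e2 w2 c2) : e1 = e2 ∧ c1 = c2 ∧ w1 = w2 := by
  simp only [glue, List.cons_append, List.cons.injEq] at h
  obtain ⟨-, h⟩ := h
  obtain ⟨he, hcw⟩ := List.append_inj h hlen
  simp only [List.cons.injEq] at hcw
  exact ⟨he, hcw.1, hcw.2⟩

lemma glue_inj_lt_ff (he1 : isDy e1) (he2 : isDy e2)
    (hlt : e1.length < e2.length)
    (h : glue e1 w1 false = glue e2 w2 false) : False := by
  have h1 : ct ((glue e1 w1 false).take (e1.length+2)) = cf ((glue e1 w1 false).take (e1.length+2)) :=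
    eqpt_false_mid he1
  rw [h] at h1
  have hle : e1.length + 1 ≤ e2.length := by omega
  have hev1 := isDy_len he1
  have hev2 := isDy_len he2
  have hle2 : e1.length + 2 ≤ e2.length + 1 := by omega
  have := no_eqpt_low (w := w2) (c := false) he2 (show e1.length + 1 ≤ e2.length by omega)
  exact this h1

lemma glue_inj_lt_tt (he1 : isDy e1) (he2 : isDy e2) (hw1 : bal w1) (hw2 : bal w2)
    (hlt : e1.length < e2.length)
    (h : glue e1 w1 true = glue e2 w2 true) : False := by
  have h1 : ct ((glue e2 w2 true).take (e2.length+1)) = cf ((glue e2 w2 true).take (e2.length+1)) + 1 :=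
    h1pt_true_mid he2
  rw [← h] at h1
  exact no_h1pt_true_high he1 hw1 (by omega) h1

lemma glue_inj_ft (he1 : isDy e1) (he2 : isDy e2) (hw2 : bal w2)
    (h : glue e1 w1 false = glue e2 w2 true) : False := by
  have h1 : ct ((glue e1 w1 false).take (e1.length+2)) = cf ((glue e1 w1 false).take (e1.length+2)) :=
    eqpt_false_mid he1
  rw [h] at h1
  exact no_eqpt_true he2 hw2 (by omega) h1

lemma glue_inj (he1 : isDy e1) (he2 : isDy e2) (hw1 : bal w1) (hw2 : bal w2)
    (h : glue e1 w1 c1 = glue e2 w2 c2) : e1 = e2 ∧ c1 = c2 ∧ w1 = w2 := by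
  have hlen : e1.length = e2.length := by
    rcases lt_trichotomy e1.length e2.length with hlt | heq | hgt
    · exfalso
      cases c1 <;> cases c2
      · exact glue_inj_lt_ff he1 he2 hlt h
      · exact glue_inj_ft he1 he2 hw2 h
      · exact glue_inj_ft he2 he1 hw1 h.symm
      · exact glue_inj_lt_tt he1 he2 hw1 hw2 hlt h
    · exact heq
    · exfalso
      cases c1 <;> cases c2
      · exact glue_inj_lt_ff he2 he1 hgt h.symm
      · exact glue_inj_ft he1 he2 hw2 h
      · exact glue_inj_ft he2 he1 hw1 h.symm
      · exact glue_inj_lt_tt he2 he1 hw2 hw1 hgt h.symm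
  exact glue_append_inj hlen h

lemma nocut_glue_core (he : isDy e) (hgw : good w)
    (hpt : c = true → ct e % 2 = 0) (hpf : c = false → ct e % 2 = 1) :
    ∀ k, 0 < k → k < (glue e w c).length → ¬ cutAt (glue e w c) k := by
  rintro k hk hkl ⟨h1, h2, h3⟩
  obtain ⟨k, rfl⟩ : ∃ k', k = k' + 1 := ⟨k - 1, by omega⟩
  have hee := he.2
  have hlg : (glue e w c).length = e.length + w.length + 2 := len_glue
  rcases le_or_gt k e.length with h | h
  · rw [ct_take_glue_low h] at h1
    rw [cf_take_glue_low h] at h2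
    rw [drop_glue_low h] at h3
    have h4 := h3 (e.length - k)
    have hdl : e.length - k = (e.drop k).length := by simp
    rw [hdl, List.take_left] at h4
    have h5 : ct (e.take k) + ct (e.drop k) = ct e := by
      rw [← ct_append, List.take_append_drop]
    have h6 : cf (e.take k) + cf (e.drop k) = cf e := by
      rw [← cf_append, List.take_append_drop]
    have h7 := he.1 k
    omega
  rcases Nat.eq_or_lt_of_le (show e.length + 1 ≤ k from h) with heq | h'
  · cases c
    · rw [← heq, ct_take_glue_midf] at h1
      have := hpf rfl; omega
    · rw [← heq, ct_take_glue_midt] at h1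
      have := hpt rfl; omega
  · have hb2 : e.length + 1 ≤ k := by omega
    have hjw : 0 < k - e.length - 1 := by omega
    have hjl : k - e.length - 1 < w.length := by omega
    apply hgw.2.2.2 (k - e.length - 1) hjw hjl
    refine ⟨?_, ?_, ?_⟩
    · cases c
      · rw [ct_take_glue_highf hb2] at h1
        have := hpf rfl; omega
      · rw [ct_take_glue_hight hb2] at h1
        have := hpt rfl; omega
    · cases c
      · rw [cf_take_glue_highf hb2] at h2
        have := hpf rfl; have := hee; omega
      · rw [cf_take_glue_hight hb2] at h2
        have := hpt rfl; have := hee; omega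
    · rw [drop_glue_high hb2] at h3
      exact h3

lemma good_glue (he : isDy e) (hgw : good w) :
    good (glue e w (decide (ct e % 2 = 0))) := by
  set c := decide (ct e % 2 = 0) with hc
  have hpt : c = true → ct e % 2 = 0 := by intro h; rw [hc] at h; simpa using h
  have hpf : c = false → ct e % 2 = 1 := by
    intro h; rw [hc] at h; simp at h; omega
  refine ⟨bal_glue he.1 hgw.1 c, ?_, ?_, nocut_glue_core he hgw hpt hpf⟩
  · cases hcc : c
    · rw [ct_glue_f]; have := hpf hcc; have := hgw.2.1; omega
    · rw [ct_glue_t]; have := hpt hcc; have := hgw.2.1; omega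
  · cases hcc : c
    · rw [cf_glue_f]; have := hpf hcc; have h2 := hgw.2.2.1; have := he.2; omega
    · rw [cf_glue_t]; have := hpt hcc; have h2 := hgw.2.2.1; have := he.2; omega

lemma dy_glue (he : isDy e) (hw : isDy w) : isDy (glue e w false) := by
  refine ⟨bal_glue he.1 hw.1 false, ?_⟩
  rw [ct_glue_f, cf_glue_f, he.2, hw.2]

lemma take_succ_getD (w : List Bool) (k : ℕ) (h : k < w.length) :
    w.take (k+1) = w.take k ++ [w.getD k false] := by
  rw [List.take_succ, List.getElem?_eq_getElem h, List.getD_eq_getElem _ _ h]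
  rfl

lemma drop_cons_getD (w : List Bool) (k : ℕ) (h : k < w.length) :
    w.drop k = w.getD k false :: w.drop (k+1) := by
  rw [List.drop_eq_getElem_cons h, List.getD_eq_getElem _ _ h]

lemma head_true (hb : bal w) (hl : 0 < w.length) : ∃ t, w = true :: t := by
  cases w with
  | nil => simp at hl
  | cons b t =>
    cases b
    · have := hb 1
      simp [List.take_succ_cons, ct_cons, cf_cons, ct_nil, cf_nil] at this
    · exact ⟨t, rfl⟩

lemma split_at_first_eq (hb : bal w)
    (hex : ∃ k, 1 ≤ k ∧ k ≤ w.length ∧ ct (w.take k) = cf (w.take k)) :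
    ∃ e w', w = glue e w' false ∧ isDy e := by
  classical
  set r := Nat.find hex with hrdef
  obtain ⟨hr1, hrl, hreq⟩ : 1 ≤ r ∧ r ≤ w.length ∧ ct (w.take r) = cf (w.take r) :=
    Nat.find_spec hex
  have hmin : ∀ k, k < r → ¬(1 ≤ k ∧ k ≤ w.length ∧ ct (w.take k) = cf (w.take k)) :=
    fun k hk => Nat.find_min hex hk
  obtain ⟨t, rfl⟩ := head_true hb (by omega)
  have hrl' : r ≤ t.length + 1 := by simpa using hrl
  have hr2 : 2 ≤ r := by
    rcases Nat.eq_or_lt_of_le hr1 with h1 | h2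
    · exfalso
      rw [← h1] at hreq
      simp [List.take_succ_cons, ct_cons, cf_cons, ct_nil, cf_nil] at hreq
    · omega
  have hlast : (true :: t).getD (r-1) false = false := by
    cases hB : (true :: t).getD (r-1) false
    · rfl
    · exfalso
      have hm := hmin (r-1) (by omega)
      simp only [not_and] at hm
      have hm2 := hm (by omega) (by simp; omega)
      have hble := hb (r-1)
      have htk := take_succ_getD (true :: t) (r-1) (by simp; omega)
      rw [hB] at htk
      have hst : r - 1 + 1 = r := by omega
      rw [hst] at htk
      rw [htk, ct_append, cf_append] at hreq
      simp [ct_cons, cf_cons, ct_nil, cf_nil] at hreq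
      omega
  have h1t : r - 2 < t.length := by omega
  have hgd : t.getD (r-2) false = false := by
    have hst : r - 1 = (r-2) + 1 := by omega
    rwa [hst, List.getD_cons_succ] at hlast
  have hE : t = t.take (r-2) ++ false :: t.drop (r-1) := by
    conv_lhs => rw [← List.take_append_drop (r-2) t]
    rw [drop_cons_getD t (r-2) h1t, hgd]
    have hst : r - 2 + 1 = r - 1 := by omega
    rw [hst]
  have hel : (t.take (r-2)).length = r - 2 := by simp; omega
  have htkr : (true :: t).take r = true :: (t.take (r-2) ++ [false]) := by
    have h2 := take_succ_getD t (r-2) h1t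
    rw [hgd] at h2
    have hst2 : r - 2 + 1 = r - 1 := by omega
    rw [hst2] at h2
    have h3 : (true :: t).take ((r-1)+1) = true :: t.take (r-1) := List.take_succ_cons
    have hst3 : r - 1 + 1 = r := by omega
    rw [hst3] at h3
    rw [h3, h2]
  refine ⟨t.take (r-2), t.drop (r-1), ?_, ?_, ?_⟩
  · rw [glue]
    exact congrArg (true :: ·) hE
  · apply bal_of_prefixes
    intro j hj
    have hjl : j ≤ r - 2 := by rw [hel] at hj; omega
    have htj : (t.take (r-2)).take j = t.take j := by
      rw [List.take_take]
      congr 1; omega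
    rw [htj]
    have hm := hmin (j+1) (by omega)
    simp only [not_and] at hm
    have hm2 := hm (by omega) (by simp; omega)
    have hble := hb (j+1)
    rw [List.take_succ_cons] at hm2 hble
    rw [ct_cons, cf_cons] at hm2 hble
    simp at hm2 hble
    omega
  · rw [htkr] at hreq
    rw [ct_cons, cf_cons, ct_append, cf_append] at hreq
    simp [ct_cons, cf_cons, ct_nil, cf_nil] at hreq
    omega

lemma split_at_last_one (hb : bal w) (hl : 0 < w.length)
    (hnoeq : ∀ k, 1 ≤ k → k ≤ w.length → ct (w.take k) ≠ cf (w.take k))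
    (hne1 : ct w ≠ cf w + 1) :
    ∃ e w', w = glue e w' true ∧ isDy e ∧ bal w' := by
  classical
  obtain ⟨t, rfl⟩ := head_true hb hl
  set Q : ℕ → Prop := fun k => 1 ≤ k ∧ ct ((true :: t).take k) = cf ((true :: t).take k) + 1
    with hQdef
  have hq1 : Q 1 := by
    constructor
    · omega
    · simp [List.take_succ_cons, ct_cons, cf_cons, ct_nil, cf_nil]
  haveI hinst : DecidablePred Q := by
    intro k; rw [hQdef]; exact instDecidableAnd
  set r := Nat.findGreatest Q (true :: t).length with hrdef
  have hQr : Q r := Nat.findGreatest_spec (m := 1) (by simp) hq1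
  have hrle : r ≤ (true :: t).length := Nat.findGreatest_le _
  have hgr : ∀ k, r < k → k ≤ (true :: t).length → ¬ Q k :=
    fun k hk hk2 => Nat.findGreatest_is_greatest hk hk2
  obtain ⟨hr1, hreq⟩ := hQr
  have hgt2 : ∀ k, r < k → k ≤ (true :: t).length →
      cf ((true :: t).take k) + 2 ≤ ct ((true :: t).take k) := by
    intro k hk hk2
    have h1 := hb k
    have h2 := hnoeq k (by omega) hk2
    have h3 := hgr k hk hk2
    rw [hQdef] at h3
    simp only [not_and] at h3
    have h4 := h3 (by omega)
    omega
  have hrlt : r < (true :: t).length := by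
    rcases Nat.eq_or_lt_of_le hrle with h | h
    · exfalso
      rw [h, List.take_length] at hreq
      exact hne1 hreq
    · exact h
  have hrt : (true :: t).getD r false = true := by
    cases hB : (true :: t).getD r false
    · exfalso
      have htk := take_succ_getD (true :: t) r hrlt
      rw [hB] at htk
      have hg := hgt2 (r+1) (by omega) (by omega)
      rw [htk, ct_append, cf_append] at hg
      simp [ct_cons, cf_cons, ct_nil, cf_nil] at hg
      omega
    · rfl
  have h1t : r - 1 < t.length := by simp at hrlt; omega
  have hgd : t.getD (r-1) false = true := by
    have hst : r = (r-1) + 1 := by omega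
    rw [hst] at hrt
    rwa [List.getD_cons_succ] at hrt
  have hE : t = t.take (r-1) ++ true :: t.drop r := by
    conv_lhs => rw [← List.take_append_drop (r-1) t]
    rw [drop_cons_getD t (r-1) h1t, hgd]
    have hst : r - 1 + 1 = r := by omega
    rw [hst]
  have hel : (t.take (r-1)).length = r - 1 := by simp; omega
  have htkr : (true :: t).take r = true :: t.take (r-1) := by
    have h3 : (true :: t).take ((r-1)+1) = true :: t.take (r-1) := List.take_succ_cons
    have hst3 : r - 1 + 1 = r := by omega
    rw [hst3] at h3
    exact h3
  refine ⟨t.take (r-1), t.drop r, ?_, ⟨?_, ?_⟩, ?_⟩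
  · rw [glue]
    exact congrArg (true :: ·) hE
  · apply bal_of_prefixes
    intro j hj
    have hjl : j ≤ r - 1 := by rw [hel] at hj; omega
    have htj : (t.take (r-1)).take j = t.take j := by
      rw [List.take_take]
      congr 1; omega
    rw [htj]
    have hm := hnoeq (j+1) (by omega) (by simp; omega)
    have hble := hb (j+1)
    rw [List.take_succ_cons] at hm hble
    rw [ct_cons, cf_cons] at hm hble
    simp at hm hble
    omega
  · rw [htkr] at hreq
    rw [ct_cons, cf_cons] at hreq
    simp at hreq
    omega
  · apply bal_of_prefixes
    intro j hj
    have hlen : (t.drop r).length = t.length - r := by simp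
    have hkk : r + 1 + j ≤ (true :: t).length := by simp at hrlt ⊢; omega
    have hg := hgt2 (r + 1 + j) (by omega) hkk
    have hadd : (true :: t).take (r + 1 + j)
        = (true :: t).take (r+1) ++ ((true :: t).drop (r+1)).take j := by
      rw [← List.take_add]
    have hdrop : (true :: t).drop (r+1) = t.drop r := by
      rw [List.drop_succ_cons]
    have htk1 : (true :: t).take (r+1) = (true :: t).take r ++ [true] := by
      rw [take_succ_getD (true :: t) r hrlt, hrt]
    rw [hadd, hdrop, htk1, htkr] at hg
    rw [ct_append, cf_append, ct_append, cf_append] at hg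
    rw [ct_cons, cf_cons] at hg
    have hble2 := hreq
    rw [htkr, ct_cons, cf_cons] at hble2
    simp [ct_cons, cf_cons, ct_nil, cf_nil] at hg hble2
    omega

lemma ct_take_shift_f (hs : w = glue e w' false) (j : ℕ) :
    ct (w.take (e.length + 2 + j)) = ct e + 1 + ct (w'.take j) := by
  have h := ct_take_glue_highf (e := e) (w := w') (k := e.length + 1 + j) (by omega)
  have h1 : e.length + 1 + j + 1 = e.length + 2 + j := by omega
  have h2 : e.length + 1 + j - e.length - 1 = j := by omega
  rw [h1, h2] at h
  rw [hs]; exact h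

lemma cf_take_shift_f (hs : w = glue e w' false) (j : ℕ) :
    cf (w.take (e.length + 2 + j)) = cf e + 1 + cf (w'.take j) := by
  have h := cf_take_glue_highf (e := e) (w := w') (k := e.length + 1 + j) (by omega)
  have h1 : e.length + 1 + j + 1 = e.length + 2 + j := by omega
  have h2 : e.length + 1 + j - e.length - 1 = j := by omega
  rw [h1, h2] at h
  rw [hs]; exact h

lemma ct_take_shift_t (hs : w = glue e w' true) (j : ℕ) :
    ct (w.take (e.length + 2 + j)) = ct e + 2 + ct (w'.take j) := by
  have h := ct_take_glue_hight (e := e) (w := w') (k := e.length + 1 + j) (by omega)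
  have h1 : e.length + 1 + j + 1 = e.length + 2 + j := by omega
  have h2 : e.length + 1 + j - e.length - 1 = j := by omega
  rw [h1, h2] at h
  rw [hs]; exact h

lemma cf_take_shift_t (hs : w = glue e w' true) (j : ℕ) :
    cf (w.take (e.length + 2 + j)) = cf e + cf (w'.take j) := by
  have h := cf_take_glue_hight (e := e) (w := w') (k := e.length + 1 + j) (by omega)
  have h1 : e.length + 1 + j + 1 = e.length + 2 + j := by omega
  have h2 : e.length + 1 + j - e.length - 1 = j := by omega
  rw [h1, h2] at h
  rw [hs]; exact h

lemma drop_shift (hs : w = glue e w' c) (j : ℕ) :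
    w.drop (e.length + 2 + j) = w'.drop j := by
  have h := drop_glue_high (e := e) (w := w') (c := c) (k := e.length + 1 + j) (by omega)
  have h1 : e.length + 1 + j + 1 = e.length + 2 + j := by omega
  have h2 : e.length + 1 + j - e.length - 1 = j := by omega
  rw [h1, h2] at h
  rw [hs]; exact h

lemma destruct_good (hw : good w) (hl : 0 < w.length) :
    ∃ e w', isDy e ∧ good w' ∧ w = glue e w' (decide (ct e % 2 = 0)) := by
  obtain ⟨hb, hct, hcf, hnc⟩ := hw
  by_cases hex : ∃ k, 1 ≤ k ∧ k ≤ w.length ∧ ct (w.take k) = cf (w.take k)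
  · obtain ⟨e, w', hs, he⟩ := split_at_first_eq hb hex
    have hlw : w.length = e.length + w'.length + 2 := by rw [hs, len_glue]
    have hbw' : bal w' := by
      apply bal_of_prefixes
      intro j hj
      have h1 := hb (e.length + 2 + j)
      rw [ct_take_shift_f hs, cf_take_shift_f hs] at h1
      have := he.2
      omega
    have hmidct : ct (w.take (e.length + 2)) = ct e + 1 := by
      rw [hs, ct_take_glue_midf]
    have hmidcf : cf (w.take (e.length + 2)) = ct e + 1 := by
      rw [hs, cf_take_glue_midf, he.2]
    have hdrop : w.drop (e.length + 2) = w' := by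
      rw [hs, drop_glue_start]
    have hcto : ct e % 2 = 1 := by
      rcases Nat.lt_or_ge (e.length + 2) w.length with hlt | hge
      · by_contra h0
        exact hnc (e.length + 2) (by omega) hlt
          ⟨by rw [hmidct]; omega, by rw [hmidcf]; omega, by rw [hdrop]; exact hbw'⟩
      · have hw0 : w'.length = 0 := by omega
        have : w.take (e.length + 2) = w := take_saturate w (by omega)
        rw [this] at hmidct
        omega
    have hctw : ct w = ct e + 1 + ct w' := by rw [hs, ct_glue_f]
    have hcfw : cf w = cf e + 1 + cf w' := by rw [hs, cf_glue_f]
    have hgw' : good w' := by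
      refine ⟨hbw', by omega, by have := he.2; omega, ?_⟩
      rintro j hj hjl ⟨c1, c2, c3⟩
      apply hnc (e.length + 2 + j) (by omega) (by omega)
      refine ⟨?_, ?_, ?_⟩
      · rw [ct_take_shift_f hs]; omega
      · rw [cf_take_shift_f hs]; have := he.2; omega
      · rw [drop_shift hs]; exact c3
    refine ⟨e, w', he, hgw', ?_⟩
    have : (decide (ct e % 2 = 0)) = false := by simp; omega
    rw [this]; exact hs
  · push_neg at hex
    have hnoeq : ∀ k, 1 ≤ k → k ≤ w.length → ct (w.take k) ≠ cf (w.take k) := hex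
    have hne1 : ct w ≠ cf w + 1 := by omega
    obtain ⟨e, w', hs, he, hbw'⟩ := split_at_last_one hb hl hnoeq hne1
    have hlw : w.length = e.length + w'.length + 2 := by rw [hs, len_glue]
    have hmidct : ct (w.take (e.length + 2)) = ct e + 2 := by
      rw [hs, ct_take_glue_midt]
    have hmidcf : cf (w.take (e.length + 2)) = ct e := by
      rw [hs, cf_take_glue_midt, he.2]
    have hdrop : w.drop (e.length + 2) = w' := by
      rw [hs, drop_glue_start]
    have hcte : ct e % 2 = 0 := by
      rcases Nat.lt_or_ge (e.length + 2) w.length with hlt | hge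
      · by_contra h0
        exact hnc (e.length + 2) (by omega) hlt
          ⟨by rw [hmidct]; omega, by rw [hmidcf]; omega, by rw [hdrop]; exact hbw'⟩
      · have hw0 : w'.length = 0 := by omega
        have : w.take (e.length + 2) = w := take_saturate w (by omega)
        rw [this] at hmidct
        omega
    have hctw : ct w = ct e + 2 + ct w' := by rw [hs, ct_glue_t]
    have hcfw : cf w = cf e + cf w' := by rw [hs, cf_glue_t]
    have hgw' : good w' := by
      refine ⟨hbw', by omega, by have := he.2; omega, ?_⟩
      rintro j hj hjl ⟨c1, c2, c3⟩
      apply hnc (e.length + 2 + j) (by omega) (by omega)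
      refine ⟨?_, ?_, ?_⟩
      · rw [ct_take_shift_t hs]; omega
      · rw [cf_take_shift_t hs]; have := he.2; omega
      · rw [drop_shift hs]; exact c3
    refine ⟨e, w', he, hgw', ?_⟩
    have : (decide (ct e % 2 = 0)) = true := by simp; omega
    rw [this]; exact hs

lemma destruct_dy (hw : isDy w) (hl : 0 < w.length) :
    ∃ e w', isDy e ∧ isDy w' ∧ w = glue e w' false := by
  have hex : ∃ k, 1 ≤ k ∧ k ≤ w.length ∧ ct (w.take k) = cf (w.take k) :=
    ⟨w.length, by omega, le_rfl, by rw [List.take_length]; exact hw.2⟩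
  obtain ⟨e, w', hs, he⟩ := split_at_first_eq hw.1 hex
  have hbw' : bal w' := by
    apply bal_of_prefixes
    intro j hj
    have h1 := hw.1 (e.length + 2 + j)
    rw [ct_take_shift_f hs, cf_take_shift_f hs] at h1
    have := he.2
    omega
  have hctw : ct w = ct e + 1 + ct w' := by rw [hs, ct_glue_f]
  have hcfw : cf w = cf e + 1 + cf w' := by rw [hs, cf_glue_f]
  have h2 := hw.2
  have h3 := he.2
  exact ⟨e, w', he, ⟨hbw', by omega⟩, hs⟩

def Wdy (n : ℕ) : Type := {w : List Bool // w.length = 2*n ∧ isDy w}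
def Wgood (n : ℕ) : Type := {w : List Bool // w.length = 2*n ∧ good w}

lemma finite_word_subtype (P : List Bool → Prop) (n : ℕ) :
    Finite {w : List Bool // w.length = n ∧ P w} := by
  apply Finite.of_injective (fun w : {w : List Bool // w.length = n ∧ P w} =>
    (fun i : Fin n => w.1.getD i false))
  rintro ⟨w1, h1, hp1⟩ ⟨w2, h2, hp2⟩ h
  apply Subtype.ext
  show w1 = w2
  apply List.ext_getElem (by omega)
  intro i hi1 hi2
  have h3 : w1.getD i false = w2.getD i false := congrFun h ⟨i, by omega⟩
  rwa [List.getD_eq_getElem _ _ hi1, List.getD_eq_getElem _ _ hi2] at h3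

instance (n : ℕ) : Finite (Wdy n) := finite_word_subtype _ _
instance (n : ℕ) : Finite (Wgood n) := finite_word_subtype _ _

lemma nat_card_sigma_fin {n : ℕ} (β : Fin n → Type) [∀ i, Finite (β i)] :
    Nat.card ((i : Fin n) × β i) = ∑ i, Nat.card (β i) := by
  letI : ∀ i, Fintype (β i) := fun i => Fintype.ofFinite _
  rw [Nat.card_eq_fintype_card, Fintype.card_sigma]
  exact Finset.sum_congr rfl fun i _ => (Nat.card_eq_fintype_card).symm

def buildD (n : ℕ) : ((i : Fin (n+1)) × (Wdy i × Wdy (n - i))) → Wdy (n+1) :=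
  fun x => ⟨glue x.2.1.1 x.2.2.1 false,
    by
      have h1 := x.2.1.2.1
      have h2 := x.2.2.2.1
      have h3 := x.1.isLt
      rw [len_glue]
      omega,
    dy_glue x.2.1.2.2 x.2.2.2.2⟩

lemma buildD_bij (n : ℕ) : Function.Bijective (buildD n) := by
  constructor
  · rintro ⟨i1, ⟨e1, hle1, hde1⟩, ⟨w1, hlw1, hdw1⟩⟩ ⟨i2, ⟨e2, hle2, hde2⟩, ⟨w2, hlw2, hdw2⟩⟩ h
    have hglue : glue e1 w1 false = glue e2 w2 false := congrArg Subtype.val h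
    obtain ⟨heq, -, hweq⟩ := glue_inj hde1 hde2 hdw1.1 hdw2.1 hglue
    have hieq : i1 = i2 := by
      apply Fin.ext
      have : e1.length = e2.length := by rw [heq]
      omega
    subst hieq; subst heq; subst hweq
    rfl
  · rintro ⟨w, hlen, hdy⟩
    obtain ⟨e, w', he, hw', hs⟩ := destruct_dy hdy (by omega)
    have hlw : w.length = e.length + w'.length + 2 := by rw [hs, len_glue]
    have hel : e.length = 2 * ct e := isDy_len he
    have hwl : w'.length = 2 * ct w' := isDy_len hw'
    have hile : ct e ≤ n := by omega
    refine ⟨⟨⟨ct e, by omega⟩, ⟨e, ?_, he⟩, ⟨w', ?_, hw'⟩⟩, Subtype.ext hs.symm⟩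
    · show e.length = 2 * ct e
      omega
    · show w'.length = 2 * (n - ct e)
      omega

def buildA (n : ℕ) : ((i : Fin (n+1)) × (Wdy i × Wgood (n - i))) → Wgood (n+1) :=
  fun x => ⟨glue x.2.1.1 x.2.2.1 (decide (ct x.2.1.1 % 2 = 0)),
    by
      have h1 := x.2.1.2.1
      have h2 := x.2.2.2.1
      have h3 := x.1.isLt
      rw [len_glue]
      omega,
    good_glue x.2.1.2.2 x.2.2.2.2⟩

lemma buildA_bij (n : ℕ) : Function.Bijective (buildA n) := by
  constructor
  · rintro ⟨i1, ⟨e1, hle1, hde1⟩, ⟨w1, hlw1, hdw1⟩⟩ ⟨i2, ⟨e2, hle2, hde2⟩, ⟨w2, hlw2, hdw2⟩⟩ h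
    have hglue : glue e1 w1 (decide (ct e1 % 2 = 0)) = glue e2 w2 (decide (ct e2 % 2 = 0)) :=
      congrArg Subtype.val h
    obtain ⟨heq, -, hweq⟩ := glue_inj hde1 hde2 hdw1.1 hdw2.1 hglue
    have hieq : i1 = i2 := by
      apply Fin.ext
      have : e1.length = e2.length := by rw [heq]
      omega
    subst hieq; subst heq; subst hweq
    rfl
  · rintro ⟨w, hlen, hgd⟩
    obtain ⟨e, w', he, hw', hs⟩ := destruct_good hgd (by omega)
    have hlw : w.length = e.length + w'.length + 2 := by rw [hs, len_glue]
    have hel : e.length = 2 * ct e := isDy_len he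
    have hwl : w'.length = 2 * (ct w' + cf w') / 2 := by
      have := ct_add_cf w'; omega
    have hwleven : w'.length % 2 = 0 := by omega
    have hile : ct e ≤ n := by omega
    refine ⟨⟨⟨ct e, by omega⟩, ⟨e, ?_, he⟩, ⟨w', ?_, hw'⟩⟩, Subtype.ext hs.symm⟩
    · show e.length = 2 * ct e
      omega
    · show w'.length = 2 * (n - ct e)
      omega

lemma cardWdy (n : ℕ) : Nat.card (Wdy n) = catalan n := by
  induction n using Nat.strong_induction_on with
  | _ n ih =>
    match n with
    | 0 =>
      rw [catalan_zero]
      haveI : Unique (Wdy 0) := by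
        refine ⟨⟨⟨[], by simp, isDy_nil⟩⟩, ?_⟩
        rintro ⟨w, hw, -⟩
        apply Subtype.ext
        simpa using List.length_eq_zero_iff.mp (by simpa using hw)
      exact Nat.card_unique
    | n+1 =>
      have he := Equiv.ofBijective _ (buildD_bij n)
      rw [← Nat.card_congr he, nat_card_sigma_fin, catalan_succ]
      apply Finset.sum_congr rfl
      intro i _
      rw [Nat.card_prod]
      rw [ih i (by omega), ih (n - i) (by omega)]

lemma cardWgood (n : ℕ) : Nat.card (Wgood n) = catalan n := by
  induction n using Nat.strong_induction_on with
  | _ n ih =>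
    match n with
    | 0 =>
      rw [catalan_zero]
      haveI : Unique (Wgood 0) := by
        refine ⟨⟨⟨[], by simp, good_nil⟩⟩, ?_⟩
        rintro ⟨w, hw, -⟩
        apply Subtype.ext
        simpa using List.length_eq_zero_iff.mp (by simpa using hw)
      exact Nat.card_unique
    | n+1 =>
      have he := Equiv.ofBijective _ (buildA_bij n)
      rw [← Nat.card_congr he, nat_card_sigma_fin, catalan_succ]
      apply Finset.sum_congr rfl
      intro i _
      rw [Nat.card_prod]
      rw [cardWdy i, ih (n - i) (by omega)]


def pos1 : List Bool → List ℕ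
  | [] => []
  | b :: w => if b then 1 :: (pos1 w).map (· + 1) else (pos1 w).map (· + 1)
def pos0 : List Bool → List ℕ
  | [] => []
  | b :: w => if b then (pos0 w).map (· + 1) else 1 :: (pos0 w).map (· + 1)

lemma pos1_nil : pos1 [] = [] := rfl
lemma pos0_nil : pos0 [] = [] := rfl
lemma pos1_cons_t (w : List Bool) : pos1 (true :: w) = 1 :: (pos1 w).map (· + 1) := rfl
lemma pos1_cons_f (w : List Bool) : pos1 (false :: w) = (pos1 w).map (· + 1) := rfl
lemma pos0_cons_t (w : List Bool) : pos0 (true :: w) = (pos0 w).map (· + 1) := rfl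
lemma pos0_cons_f (w : List Bool) : pos0 (false :: w) = 1 :: (pos0 w).map (· + 1) := rfl

lemma len_pos1 (w : List Bool) : (pos1 w).length = ct w := by
  induction w with
  | nil => rfl
  | cons b t ih => cases b <;> simp [pos1_cons_t, pos1_cons_f, ct, List.count_cons, ih] <;> omega

lemma len_pos0 (w : List Bool) : (pos0 w).length = cf w := by
  induction w with
  | nil => rfl
  | cons b t ih => cases b <;> simp [pos0_cons_t, pos0_cons_f, cf, List.count_cons, ih] <;> omega

lemma mem_pos1 (w : List Bool) (x : ℕ) :
    x ∈ pos1 w ↔ 1 ≤ x ∧ x ≤ w.length ∧ w.getD (x-1) false = true := by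
  induction w generalizing x with
  | nil => simp [pos1_nil]
  | cons b t ih =>
    cases b
    · rw [pos1_cons_f]
      constructor
      · intro hx
        simp only [List.mem_map] at hx
        obtain ⟨y, hy, rfl⟩ := hx
        obtain ⟨h1, h2, h3⟩ := (ih y).mp hy
        refine ⟨by omega, by simp; omega, ?_⟩
        have hst : y + 1 - 1 = (y - 1) + 1 := by omega
        rw [hst, List.getD_cons_succ]
        exact h3
      · rintro ⟨h1, h2, h3⟩
        rcases Nat.eq_or_lt_of_le h1 with h | h
        · exfalso
          rw [← h] at h3
          simp [List.getD_cons_zero] at h3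
        · simp only [List.mem_map]
          refine ⟨x - 1, (ih (x-1)).mpr ⟨by omega, by simp at h2; omega, ?_⟩, by omega⟩
          have hst : x - 1 = (x - 1 - 1) + 1 := by omega
          rw [hst] at h3
          rwa [List.getD_cons_succ] at h3
    · rw [pos1_cons_t]
      constructor
      · intro hx
        simp only [List.mem_cons, List.mem_map] at hx
        rcases hx with rfl | ⟨y, hy, rfl⟩
        · exact ⟨le_rfl, by simp, by simp [List.getD_cons_zero]⟩
        · obtain ⟨h1, h2, h3⟩ := (ih y).mp hy
          refine ⟨by omega, by simp; omega, ?_⟩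
          have hst : y + 1 - 1 = (y - 1) + 1 := by omega
          rw [hst, List.getD_cons_succ]
          exact h3
      · rintro ⟨h1, h2, h3⟩
        rcases Nat.eq_or_lt_of_le h1 with h | h
        · rw [← h]; simp
        · simp only [List.mem_cons, List.mem_map]
          right
          refine ⟨x - 1, (ih (x-1)).mpr ⟨by omega, by simp at h2; omega, ?_⟩, by omega⟩
          have hst : x - 1 = (x - 1 - 1) + 1 := by omega
          rw [hst] at h3
          rwa [List.getD_cons_succ] at h3

lemma mem_pos0 (w : List Bool) (x : ℕ) :
    x ∈ pos0 w ↔ 1 ≤ x ∧ x ≤ w.length ∧ w.getD (x-1) false = false := by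
  induction w generalizing x with
  | nil => simp [pos0_nil]; omega
  | cons b t ih =>
    cases b
    · rw [pos0_cons_f]
      constructor
      · intro hx
        simp only [List.mem_cons, List.mem_map] at hx
        rcases hx with rfl | ⟨y, hy, rfl⟩
        · exact ⟨le_rfl, by simp, by simp [List.getD_cons_zero]⟩
        · obtain ⟨h1, h2, h3⟩ := (ih y).mp hy
          refine ⟨by omega, by simp; omega, ?_⟩
          have hst : y + 1 - 1 = (y - 1) + 1 := by omega
          rw [hst, List.getD_cons_succ]
          exact h3
      · rintro ⟨h1, h2, h3⟩
        rcases Nat.eq_or_lt_of_le h1 with h | h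
        · rw [← h]; simp
        · simp only [List.mem_cons, List.mem_map]
          right
          refine ⟨x - 1, (ih (x-1)).mpr ⟨by omega, by simp at h2; omega, ?_⟩, by omega⟩
          have hst : x - 1 = (x - 1 - 1) + 1 := by omega
          rw [hst] at h3
          rwa [List.getD_cons_succ] at h3
    · rw [pos0_cons_t]
      constructor
      · intro hx
        simp only [List.mem_map] at hx
        obtain ⟨y, hy, rfl⟩ := hx
        obtain ⟨h1, h2, h3⟩ := (ih y).mp hy
        refine ⟨by omega, by simp; omega, ?_⟩
        have hst : y + 1 - 1 = (y - 1) + 1 := by omega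
        rw [hst, List.getD_cons_succ]
        exact h3
      · rintro ⟨h1, h2, h3⟩
        rcases Nat.eq_or_lt_of_le h1 with h | h
        · exfalso
          rw [← h] at h3
          simp [List.getD_cons_zero] at h3
        · simp only [List.mem_map]
          refine ⟨x - 1, (ih (x-1)).mpr ⟨by omega, by simp at h2; omega, ?_⟩, by omega⟩
          have hst : x - 1 = (x - 1 - 1) + 1 := by omega
          rw [hst] at h3
          rwa [List.getD_cons_succ] at h3

lemma pos1_sorted (w : List Bool) : (pos1 w).Pairwise (· < ·) := by
  induction w with
  | nil => simp [pos1_nil]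
  | cons b t ih =>
    have hmap : ((pos1 t).map (· + 1)).Pairwise (· < ·) :=
      List.Pairwise.map _ (fun a b h => by omega) ih
    cases b
    · rw [pos1_cons_f]; exact hmap
    · rw [pos1_cons_t]
      refine List.pairwise_cons.mpr ⟨?_, hmap⟩
      intro y hy
      simp only [List.mem_map] at hy
      obtain ⟨z, hz, rfl⟩ := hy
      have := (mem_pos1 t z).mp hz
      omega

lemma pos0_sorted (w : List Bool) : (pos0 w).Pairwise (· < ·) := by
  induction w with
  | nil => simp [pos0_nil]
  | cons b t ih =>
    have hmap : ((pos0 t).map (· + 1)).Pairwise (· < ·) :=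
      List.Pairwise.map _ (fun a b h => by omega) ih
    cases b
    · rw [pos0_cons_f]
      refine List.pairwise_cons.mpr ⟨?_, hmap⟩
      intro y hy
      simp only [List.mem_map] at hy
      obtain ⟨z, hz, rfl⟩ := hy
      have := (mem_pos0 t z).mp hz
      omega
    · rw [pos0_cons_t]; exact hmap

lemma pos_perm (w : List Bool) : (pos1 w ++ pos0 w).Perm (List.range' 1 w.length) := by
  induction w with
  | nil => simp [pos1_nil, pos0_nil]
  | cons b t ih =>
    have hmaps : ((pos1 t).map (· + 1) ++ (pos0 t).map (· + 1)).Perm (List.range' 2 t.length) := by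
      rw [← List.map_append]
      have h2 := ih.map (· + 1)
      have h3 : (List.range' 1 t.length).map (· + 1) = List.range' 2 t.length := by
        have := List.map_add_range' (a := 1) 1 t.length 1
        rw [← this]
        apply List.map_congr_left
        intro x _
        omega
      rwa [h3] at h2
    have hr : List.range' 1 (t.length + 1) = 1 :: List.range' 2 t.length := by
      rw [List.range'_succ]
    cases b
    · rw [pos1_cons_f, pos0_cons_f]
      simp only [List.length_cons, hr]
      exact List.Perm.trans List.perm_middle (hmaps.cons 1)
    · rw [pos1_cons_t, pos0_cons_t]
      simp only [List.length_cons, hr, List.cons_append]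
      exact hmaps.cons 1

lemma pos1_append (u v : List Bool) :
    pos1 (u ++ v) = pos1 u ++ (pos1 v).map (· + u.length) := by
  induction u with
  | nil => simp [pos1_nil]
  | cons b t ih =>
    cases b
    · simp only [List.cons_append, pos1_cons_f, ih, List.map_append, List.map_map]
      congr 1
    · simp only [List.cons_append, pos1_cons_t, ih, List.map_append, List.map_map]
      congr 2

lemma pos0_append (u v : List Bool) :
    pos0 (u ++ v) = pos0 u ++ (pos0 v).map (· + u.length) := by
  induction u with
  | nil => simp [pos0_nil]
  | cons b t ih =>
    cases b
    · simp only [List.cons_append, pos0_cons_f, ih, List.map_append, List.map_map]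
      congr 2
    · simp only [List.cons_append, pos0_cons_t, ih, List.map_append, List.map_map]
      congr 1

lemma countP_pos1 (w : List Bool) (k : ℕ) :
    (pos1 w).countP (fun x => x ≤ k) = ct (w.take k) := by
  induction w generalizing k with
  | nil => simp [pos1_nil, ct]
  | cons b t ih =>
    cases k with
    | zero =>
      simp only [List.take_zero]
      rw [List.countP_eq_zero.mpr]
      · rfl
      · intro x hx
        have := (mem_pos1 _ x).mp hx
        simp
        omega
    | succ k =>
      cases b
      · rw [pos1_cons_f, List.countP_map, List.take_succ_cons]
        have : ct (false :: t.take k) = ct (t.take k) := by simp [ct, List.count_cons]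
        rw [this, ← ih k]
        apply List.countP_congr
        intro x _
        simp only [Function.comp]
        constructor <;> intro h <;> simp at h ⊢ <;> omega
      · rw [pos1_cons_t, List.countP_cons, List.countP_map, List.take_succ_cons]
        have h1 : ct (true :: t.take k) = ct (t.take k) + 1 := by simp [ct, List.count_cons]
        rw [h1, ← ih k]
        have h2 : (decide (1 ≤ k + 1)) = true := by simp
        have h3 : List.countP ((fun x => decide (x ≤ k + 1)) ∘ (· + 1)) (pos1 t)
            = List.countP (fun x => decide (x ≤ k)) (pos1 t) := by
          apply List.countP_congr
          intro x _
          simp only [Function.comp]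
          constructor <;> intro h <;> simp at h ⊢ <;> omega
        simp [h3]

lemma countP_pos0 (w : List Bool) (k : ℕ) :
    (pos0 w).countP (fun x => x ≤ k) = cf (w.take k) := by
  induction w generalizing k with
  | nil => simp [pos0_nil, cf]
  | cons b t ih =>
    cases k with
    | zero =>
      simp only [List.take_zero]
      rw [List.countP_eq_zero.mpr]
      · rfl
      · intro x hx
        have := (mem_pos0 _ x).mp hx
        simp
        omega
    | succ k =>
      cases b
      · rw [pos0_cons_f, List.countP_cons, List.countP_map, List.take_succ_cons]
        have h1 : cf (false :: t.take k) = cf (t.take k) + 1 := by simp [cf, List.count_cons]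
        rw [h1, ← ih k]
        have h3 : List.countP ((fun x => decide (x ≤ k + 1)) ∘ (· + 1)) (pos0 t)
            = List.countP (fun x => decide (x ≤ k)) (pos0 t) := by
          apply List.countP_congr
          intro x _
          simp only [Function.comp]
          constructor <;> intro h <;> simp at h ⊢ <;> omega
        simp [h3]
      · rw [pos0_cons_t, List.countP_map, List.take_succ_cons]
        have : cf (true :: t.take k) = cf (t.take k) := by simp [cf, List.count_cons]
        rw [this, ← ih k]
        apply List.countP_congr
        intro x _
        simp only [Function.comp]
        constructor <;> intro h <;> simp at h ⊢ <;> omega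

lemma sorted_getD_le (l : List ℕ) (hs : l.Pairwise (· < ·)) (j k : ℕ) (hj : j < l.length) :
    (l.getD j 0 ≤ k ↔ j + 1 ≤ l.countP (fun x => x ≤ k)) := by
  induction l generalizing j with
  | nil => simp at hj
  | cons a t ih =>
    rw [List.countP_cons]
    have hs' : t.Pairwise (· < ·) := (List.pairwise_cons.mp hs).2
    have hall : ∀ x ∈ t, a < x := (List.pairwise_cons.mp hs).1
    cases j with
    | zero =>
      simp only [List.getD_cons_zero]
      constructor
      · intro h
        have hone : (if decide (a ≤ k) = true then 1 else 0) = 1 := by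
          simp; omega
        omega
      · intro h
        by_contra hak
        push_neg at hak
        have h0 : t.countP (fun x => x ≤ k) = 0 := by
          apply List.countP_eq_zero.mpr
          intro x hx
          have := hall x hx
          simp
          omega
        have hone : (if decide (a ≤ k) = true then 1 else 0) = 0 := by
          simp; omega
        omega
    | succ j =>
      simp only [List.getD_cons_succ]
      rw [ih hs' j (by simpa using hj)]
      constructor
      · intro h
        have hpos : 0 < t.countP (fun x => x ≤ k) := by omega
        obtain ⟨x, hx, hxk⟩ := List.countP_pos_iff.mp hpos
        have hax : a < x := hall x hx
        have hak : a ≤ k := by simp at hxk; omega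
        have hone : (if decide (a ≤ k) = true then 1 else 0) = 1 := by
          simp; omega
        omega
      · intro h
        have hle : (if decide (a ≤ k) = true then 1 else 0) ≤ 1 := by
          split <;> omega
        omega

lemma tab3_ext {T1 T2 : Tab3} (h1 : T1.row1 = T2.row1) (h2 : T1.row2 = T2.row2)
    (h3 : T1.row3 = T2.row3) : T1 = T2 := by
  cases T1; cases T2
  simp only [Tab3.mk.injEq]
  exact ⟨h1, h2, h3⟩

def tabOf (w : List Bool) : Tab3 := ⟨pos1 w, pos0 w, []⟩

def wordOf (T : Tab3) : List Bool := (List.range T.size).map (fun i => decide ((i+1) ∈ T.row1))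

lemma size_tabOf (w : List Bool) : (tabOf w).size = w.length := by
  show (pos1 w).length + (pos0 w).length + ([] : List ℕ).length = w.length
  rw [len_pos1, len_pos0, List.length_nil]
  have := ct_add_cf w
  omega

lemma len_wordOf (T : Tab3) : (wordOf T).length = T.size := by simp [wordOf]

lemma bal_iff_col (w : List Bool) :
    bal w ↔ cf w ≤ ct w ∧ ∀ j, j < cf w → (pos1 w).getD j 0 < (pos0 w).getD j 0 := by
  constructor
  · intro hb
    refine ⟨bal_le hb, ?_⟩
    intro j hj
    set k := (pos0 w).getD j 0 with hk
    have hj0 : j < (pos0 w).length := by rw [len_pos0]; exact hj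
    have h1 : j + 1 ≤ (pos0 w).countP (fun x => x ≤ k) :=
      (sorted_getD_le _ (pos0_sorted w) j k hj0).mp le_rfl
    rw [countP_pos0] at h1
    have h2 : cf (w.take k) ≤ ct (w.take k) := hb k
    have h3 : j + 1 ≤ (pos1 w).countP (fun x => x ≤ k) := by rw [countP_pos1]; omega
    have hj1 : j < (pos1 w).length := by
      rw [len_pos1]
      have := bal_le hb
      omega
    have h4 : (pos1 w).getD j 0 ≤ k := (sorted_getD_le _ (pos1_sorted w) j k hj1).mpr h3
    rcases Nat.eq_or_lt_of_le h4 with heq | h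
    swap
    · exact h
    exfalso
    have hkmem : k ∈ pos0 w := by
      rw [hk, List.getD_eq_getElem _ _ hj0]
      exact List.getElem_mem _
    have hkmem1 : k ∈ pos1 w := by
      rw [← heq, List.getD_eq_getElem _ _ hj1]
      exact List.getElem_mem _
    have e0 := (mem_pos0 w k).mp hkmem
    have e1 := (mem_pos1 w k).mp hkmem1
    rw [e0.2.2] at e1
    exact Bool.false_ne_true e1.2.2
  · rintro ⟨hle, hcol⟩
    intro k
    rcases Nat.eq_zero_or_pos (cf (w.take k)) with h0 | hpos
    · omega
    · have hsub : cf (w.take k) ≤ cf w := List.Sublist.count_le _ (List.take_sublist _ _)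
      have hjlt : cf (w.take k) - 1 < cf w := by omega
      have h1 : (pos0 w).getD (cf (w.take k) - 1) 0 ≤ k := by
        apply (sorted_getD_le _ (pos0_sorted w) _ k (by rw [len_pos0]; omega)).mpr
        rw [countP_pos0]
        omega
      have h2 := hcol _ hjlt
      have h3 : (pos1 w).getD (cf (w.take k) - 1) 0 ≤ k := by omega
      have h4 := (sorted_getD_le _ (pos1_sorted w) (cf (w.take k) - 1) k
        (by rw [len_pos1]; omega)).mp h3
      rw [countP_pos1] at h4
      omega

lemma isSYT_tabOf {w : List Bool} (hb : bal w) : (tabOf w).IsSYT := by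
  obtain ⟨hle, hcol⟩ := (bal_iff_col w).mp hb
  refine ⟨?_, ?_, ?_, ?_, ?_, ?_, ?_, ?_⟩
  · show (pos0 w).length ≤ (pos1 w).length
    rw [len_pos0, len_pos1]; exact hle
  · show ([] : List ℕ).length ≤ (pos0 w).length
    simp
  · exact List.isChain_iff_pairwise.mpr (pos1_sorted w)
  · exact List.isChain_iff_pairwise.mpr (pos0_sorted w)
  · show List.Chain' (· < ·) ([] : List ℕ)
    exact List.isChain_nil
  · intro j hj
    have hj' : j < cf w := by rwa [← len_pos0]
    exact hcol j hj'
  · intro j hj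
    rw [show (tabOf w).row3 = ([] : List ℕ) from rfl] at hj
    simp at hj
  · show (pos1 w ++ pos0 w ++ []).Perm (List.range' 1 (tabOf w).size)
    rw [List.append_nil, size_tabOf]
    exact pos_perm w

lemma wordOf_tabOf (w : List Bool) : wordOf (tabOf w) = w := by
  apply List.ext_getElem
  · rw [len_wordOf, size_tabOf]
  intro i h1 h2
  simp only [wordOf, List.getElem_map, List.getElem_range]
  show decide ((i+1) ∈ pos1 w) = w[i]
  have hmem : ((i+1) ∈ pos1 w) ↔ (w[i] = true) := by
    rw [mem_pos1]
    simp only [Nat.add_sub_cancel]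
    rw [List.getD_eq_getElem _ _ h2]
    constructor
    · exact fun h => h.2.2
    · exact fun h => ⟨by omega, by omega, h⟩
  cases hB : w[i]
  · simp [hmem, hB]
  · simp [hmem, hB]

lemma tabOf_wordOf (T : Tab3) (hS : T.IsSYT) (h3 : T.row3 = []) : tabOf (wordOf T) = T := by
  obtain ⟨hba, hcb, hc1, hc2, hc3, hcol, hcol2, hperm⟩ := hS
  rw [h3, List.append_nil] at hperm
  have hnd : (T.row1 ++ T.row2).Nodup := by
    rw [hperm.nodup_iff]
    exact List.nodup_range'
  have hnd1 : T.row1.Nodup := hnd.of_append_left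
  have hnd2 : T.row2.Nodup := hnd.of_append_right
  have hdisj := (List.nodup_append.mp hnd).2.2
  have hb1 : ∀ x ∈ T.row1, 1 ≤ x ∧ x ≤ T.size := by
    intro x hx
    have hxx : x ∈ List.range' 1 T.size := hperm.subset (List.mem_append_left _ hx)
    rw [List.mem_range'_1] at hxx
    omega
  have hb2 : ∀ x ∈ T.row2, 1 ≤ x ∧ x ≤ T.size := by
    intro x hx
    have hxx : x ∈ List.range' 1 T.size := hperm.subset (List.mem_append_right _ hx)
    rw [List.mem_range'_1] at hxx
    omega
  have hword : ∀ x, 1 ≤ x → x ≤ T.size →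
      ((wordOf T).getD (x-1) false = decide (x ∈ T.row1)) := by
    intro x h1 h2
    have hxl : x - 1 < (wordOf T).length := by rw [len_wordOf]; omega
    rw [List.getD_eq_getElem _ _ hxl]
    simp only [wordOf, List.getElem_map, List.getElem_range]
    have hx : x - 1 + 1 = x := by omega
    rw [hx]
  have hm1 : ∀ x, x ∈ pos1 (wordOf T) ↔ x ∈ T.row1 := by
    intro x
    rw [mem_pos1, len_wordOf]
    constructor
    · rintro ⟨h1, h2, h3'⟩
      rw [hword x h1 h2] at h3'
      simpa using h3'
    · intro hx
      obtain ⟨h1, h2⟩ := hb1 x hx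
      exact ⟨h1, h2, by rw [hword x h1 h2]; simpa⟩
  have hm0 : ∀ x, x ∈ pos0 (wordOf T) ↔ x ∈ T.row2 := by
    intro x
    rw [mem_pos0, len_wordOf]
    constructor
    · rintro ⟨h1, h2, h3'⟩
      rw [hword x h1 h2] at h3'
      have hxr : x ∈ List.range' 1 T.size := by
        rw [List.mem_range'_1]
        omega
      have hx12 : x ∈ T.row1 ++ T.row2 := hperm.mem_iff.mpr hxr
      rw [List.mem_append] at hx12
      rcases hx12 with h | h
      · exfalso
        simp at h3'
        exact h3' h
      · exact h
    · intro hx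
      obtain ⟨h1, h2⟩ := hb2 x hx
      refine ⟨h1, h2, ?_⟩
      rw [hword x h1 h2]
      simp only [decide_eq_false_iff_not]
      intro hc
      exact hdisj x hc x hx rfl
  have hsort1 : T.row1.Pairwise (· < ·) := List.isChain_iff_pairwise.mp hc1
  have hsort2 : T.row2.Pairwise (· < ·) := List.isChain_iff_pairwise.mp hc2
  have hr1 : pos1 (wordOf T) = T.row1 := by
    exact List.Perm.eq_of_pairwise' ((pos1_sorted _).imp le_of_lt) (hsort1.imp le_of_lt)
      ((List.perm_ext_iff_of_nodup ((pos1_sorted _).imp ne_of_lt) hnd1).mpr hm1)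
  have hr0 : pos0 (wordOf T) = T.row2 := by
    exact List.Perm.eq_of_pairwise' ((pos0_sorted _).imp le_of_lt) (hsort2.imp le_of_lt)
      ((List.perm_ext_iff_of_nodup ((pos0_sorted _).imp ne_of_lt) hnd2).mpr hm0)
  exact tab3_ext hr1 hr0 h3.symm

lemma bal_wordOf (T : Tab3) (hS : T.IsSYT) (h3 : T.row3 = []) : bal (wordOf T) := by
  have hround := tabOf_wordOf T hS h3
  have hr1 : pos1 (wordOf T) = T.row1 := congrArg Tab3.row1 hround
  have hr0 : pos0 (wordOf T) = T.row2 := congrArg Tab3.row2 hround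
  apply (bal_iff_col (wordOf T)).mpr
  constructor
  · rw [← len_pos0, ← len_pos1, hr1, hr0]
    exact hS.1
  · intro j hj
    rw [hr1, hr0]
    apply hS.2.2.2.2.2.1
    rw [← len_pos0, hr0] at hj
    exact hj

lemma ct_wordOf (T : Tab3) (hS : T.IsSYT) (h3 : T.row3 = []) :
    ct (wordOf T) = T.row1.length := by
  have hr1 : pos1 (wordOf T) = T.row1 := congrArg Tab3.row1 (tabOf_wordOf T hS h3)
  rw [← len_pos1, hr1]

lemma cf_wordOf (T : Tab3) (hS : T.IsSYT) (h3 : T.row3 = []) :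
    cf (wordOf T) = T.row2.length := by
  have hr0 : pos0 (wordOf T) = T.row2 := congrArg Tab3.row2 (tabOf_wordOf T hS h3)
  rw [← len_pos0, hr0]

lemma decomp_of_cut (w : List Bool) (k : ℕ) (hb : bal w)
    (hct : ct w % 2 = 0) (hcf : cf w % 2 = 0)
    (hk2 : k < w.length) (hc : cutAt w k) :
    ∃ T1 T2 : Tab3, T1.IsSYT ∧ T2.IsSYT ∧ T1.TwoOddRows ∧ T2.TwoOddRows ∧
      tabOf w = T1.concat T2 := by
  obtain ⟨h1, h2, h3⟩ := hc
  have htl : (w.take k).length = k := by simp; omega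
  have hsz : (tabOf (w.take k)).size = k := by rw [size_tabOf, htl]
  have hctd : ct w = ct (w.take k) + ct (w.drop k) := by
    rw [← ct_append, List.take_append_drop]
  have hcfd : cf w = cf (w.take k) + cf (w.drop k) := by
    rw [← cf_append, List.take_append_drop]
  refine ⟨tabOf (w.take k), tabOf (w.drop k), isSYT_tabOf (bal_take hb k), isSYT_tabOf h3,
    ⟨rfl, ?_, ?_⟩, ⟨rfl, ?_, ?_⟩, ?_⟩
  · show (pos1 (w.take k)).length % 2 = 1
    rw [len_pos1]; exact h1
  · show (pos0 (w.take k)).length % 2 = 1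
    rw [len_pos0]; exact h2
  · show (pos1 (w.drop k)).length % 2 = 1
    rw [len_pos1]; omega
  · show (pos0 (w.drop k)).length % 2 = 1
    rw [len_pos0]; omega
  · apply tab3_ext
    · show pos1 w = pos1 (w.take k) ++ (pos1 (w.drop k)).map (· + (tabOf (w.take k)).size)
      rw [hsz]
      conv_lhs => rw [← List.take_append_drop k w]
      rw [pos1_append, htl]
    · show pos0 w = pos0 (w.take k) ++ (pos0 (w.drop k)).map (· + (tabOf (w.take k)).size)
      rw [hsz]
      conv_lhs => rw [← List.take_append_drop k w]
      rw [pos0_append, htl]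
    · show ([] : List ℕ) = [] ++ ([] : List ℕ).map (· + (tabOf (w.take k)).size)
      simp

lemma cut_of_decomp (w : List Bool) (T1 T2 : Tab3)
    (hS1 : T1.IsSYT) (hS2 : T2.IsSYT) (hO1 : T1.TwoOddRows) (hO2 : T2.TwoOddRows)
    (hT : tabOf w = T1.concat T2) :
    cutAt w T1.size ∧ 0 < T1.size ∧ T1.size < w.length := by
  have hp1 : pos1 w = T1.row1 ++ T2.row1.map (· + T1.size) := congrArg Tab3.row1 hT
  have hp0 : pos0 w = T1.row2 ++ T2.row2.map (· + T1.size) := congrArg Tab3.row2 hT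
  have hperm1 : (T1.row1 ++ T1.row2).Perm (List.range' 1 T1.size) := by
    have := hS1.2.2.2.2.2.2.2
    rwa [hO1.1, List.append_nil] at this
  have hperm2 : (T2.row1 ++ T2.row2).Perm (List.range' 1 T2.size) := by
    have := hS2.2.2.2.2.2.2.2
    rwa [hO2.1, List.append_nil] at this
  have hub1 : ∀ x ∈ T1.row1, 1 ≤ x ∧ x ≤ T1.size := by
    intro x hx
    have hxx : x ∈ List.range' 1 T1.size := hperm1.subset (List.mem_append_left _ hx)
    rw [List.mem_range'_1] at hxx
    omega
  have hub2 : ∀ x ∈ T1.row2, 1 ≤ x ∧ x ≤ T1.size := by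
    intro x hx
    have hxx : x ∈ List.range' 1 T1.size := hperm1.subset (List.mem_append_right _ hx)
    rw [List.mem_range'_1] at hxx
    omega
  have hroundT2 : pos1 (wordOf T2) = T2.row1 := congrArg Tab3.row1 (tabOf_wordOf T2 hS2 hO2.1)
  have hroundT2' : pos0 (wordOf T2) = T2.row2 := congrArg Tab3.row2 (tabOf_wordOf T2 hS2 hO2.1)
  have hbw2 : bal (wordOf T2) := bal_wordOf T2 hS2 hO2.1
  set s := T1.size with hs
  have hkey1 : ∀ j, ct (w.take (s + j)) = T1.row1.length + ct ((wordOf T2).take j) := by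
    intro j
    rw [← countP_pos1, hp1, List.countP_append, List.countP_map]
    congr 1
    · apply List.countP_eq_length.mpr
      intro x hx
      have := hub1 x hx
      simp
      omega
    · rw [← countP_pos1, hroundT2]
      apply List.countP_congr
      intro x _
      simp only [Function.comp]
      constructor <;> intro h <;> simp at h ⊢ <;> omega
  have hkey0 : ∀ j, cf (w.take (s + j)) = T1.row2.length + cf ((wordOf T2).take j) := by
    intro j
    rw [← countP_pos0, hp0, List.countP_append, List.countP_map]
    congr 1
    · apply List.countP_eq_length.mpr
      intro x hx
      have := hub2 x hx
      simp
      omega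
    · rw [← countP_pos0, hroundT2']
      apply List.countP_congr
      intro x _
      simp only [Function.comp]
      constructor <;> intro h <;> simp at h ⊢ <;> omega
  have hcts : ct (w.take s) = T1.row1.length := by
    have := hkey1 0
    simpa [ct_nil] using this
  have hcfs : cf (w.take s) = T1.row2.length := by
    have := hkey0 0
    simpa [cf_nil] using this
  have hlw : w.length = T1.size + T2.size := by
    have h1 : w.length = ct w + cf w := (ct_add_cf w).symm
    have h2 : ct w = (pos1 w).length := (len_pos1 w).symm
    have h3 : cf w = (pos0 w).length := (len_pos0 w).symm
    have h4 : (pos1 w).length = T1.row1.length + T2.row1.length := by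
      rw [hp1]; simp
    have h5 : (pos0 w).length = T1.row2.length + T2.row2.length := by
      rw [hp0]; simp
    have h6 : T1.size = T1.row1.length + T1.row2.length + T1.row3.length := rfl
    have h7 : T2.size = T2.row1.length + T2.row2.length + T2.row3.length := rfl
    have h8 : T1.row3.length = 0 := by rw [hO1.1]; rfl
    have h9 : T2.row3.length = 0 := by rw [hO2.1]; rfl
    omega
  have hsz1 : T1.size = T1.row1.length + T1.row2.length := by
    have h6 : T1.size = T1.row1.length + T1.row2.length + T1.row3.length := rfl
    have h8 : T1.row3.length = 0 := by rw [hO1.1]; rfl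
    omega
  have hsz2 : T2.size = T2.row1.length + T2.row2.length := by
    have h7 : T2.size = T2.row1.length + T2.row2.length + T2.row3.length := rfl
    have h9 : T2.row3.length = 0 := by rw [hO2.1]; rfl
    omega
  have ho11 := hO1.2.1
  have ho12 := hO1.2.2
  have ho21 := hO2.2.1
  have ho22 := hO2.2.2
  refine ⟨⟨by rw [hcts]; exact ho11, by rw [hcfs]; exact ho12, ?_⟩, by omega, by omega⟩
  intro j
  have hadd : w.take (s + j) = w.take s ++ (w.drop s).take j := List.take_add
  have hct2 : ct (w.take (s+j)) = ct (w.take s) + ct ((w.drop s).take j) := by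
    rw [hadd, ct_append]
  have hcf2 : cf (w.take (s+j)) = cf (w.take s) + cf ((w.drop s).take j) := by
    rw [hadd, cf_append]
  have hk1 := hkey1 j
  have hk0 := hkey0 j
  have hbj := hbw2 j
  omega

end S8

/-- the number of standard Young tableaux with 2n cells and at most 2 rows,
both of even length, which are not a concatenation of two standard Young tableaux each with
exactly two rows both of odd length, is the n-th Catalan number. -/
theorem statement8 (n : ℕ) :
    Nat.card {T : Tab3 // T.IsSYT ∧ T.size = 2 * n ∧ T.row3 = [] ∧
        T.row1.length % 2 = 0 ∧ T.row2.length % 2 = 0 ∧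
        ¬ ∃ T1 T2 : Tab3, T1.IsSYT ∧ T2.IsSYT ∧ T1.TwoOddRows ∧ T2.TwoOddRows ∧
          T = T1.concat T2} = catalan n := by
  have e : {T : Tab3 // T.IsSYT ∧ T.size = 2 * n ∧ T.row3 = [] ∧
        T.row1.length % 2 = 0 ∧ T.row2.length % 2 = 0 ∧
        ¬ ∃ T1 T2 : Tab3, T1.IsSYT ∧ T2.IsSYT ∧ T1.TwoOddRows ∧ T2.TwoOddRows ∧
          T = T1.concat T2} ≃ S8.Wgood n := by
    refine ⟨fun T => ⟨S8.wordOf T.1, ?_, ?_⟩, fun w => ⟨S8.tabOf w.1, ?_⟩, ?_, ?_⟩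
    · obtain ⟨T, hS, hsz, h3, hp1, hp2, hnd⟩ := T
      rw [S8.len_wordOf, hsz]
    · obtain ⟨T, hS, hsz, h3, hp1, hp2, hnd⟩ := T
      refine ⟨S8.bal_wordOf T hS h3, ?_, ?_, ?_⟩
      · rw [S8.ct_wordOf T hS h3]; exact hp1
      · rw [S8.cf_wordOf T hS h3]; exact hp2
      · intro k hk hkl hcut
        apply hnd
        obtain ⟨T1, T2, a1, a2, a3, a4, heq⟩ := S8.decomp_of_cut (S8.wordOf T) k
          (S8.bal_wordOf T hS h3)
          (by rw [S8.ct_wordOf T hS h3]; exact hp1)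
          (by rw [S8.cf_wordOf T hS h3]; exact hp2) hkl hcut
        rw [S8.tabOf_wordOf T hS h3] at heq
        exact ⟨T1, T2, a1, a2, a3, a4, heq⟩
    · obtain ⟨w, hlen, hgd⟩ := w
      refine ⟨S8.isSYT_tabOf hgd.1, ?_, rfl, ?_, ?_, ?_⟩
      · rw [S8.size_tabOf, hlen]
      · show (S8.pos1 w).length % 2 = 0
        rw [S8.len_pos1]; exact hgd.2.1
      · show (S8.pos0 w).length % 2 = 0
        rw [S8.len_pos0]; exact hgd.2.2.1
      · rintro ⟨T1, T2, a1, a2, a3, a4, heq⟩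
        obtain ⟨hcut, hpos, hlt⟩ := S8.cut_of_decomp w T1 T2 a1 a2 a3 a4 heq
        exact hgd.2.2.2 T1.size hpos hlt hcut
    · intro T
      apply Subtype.ext
      exact S8.tabOf_wordOf T.1 T.2.1 T.2.2.2.1
    · intro w
      apply Subtype.ext
      exact S8.wordOf_tabOf w.1
  rw [Nat.card_congr e, S8.cardWgood]
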